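/- In a nearly conformally symmetric manifold (NCS)_n, i.e. one where ∇_a R_{bc} − ∇_b R_{ac} = (1/(2(n−1)))(g_{bc}∇_a R − g_{ac}∇_b R), the identity R_{am}R_{bce}^m + R_{bm}R_{cae}^m + R_{cm}R_{abe}^m = 0 holds. -/

import Mathlib

open Finset
set_option linter.unusedSectionVars false

namespace NCSaux
variable {ι : Type*} [Fintype ι] [DecidableEq ι]

lemma sum3_rev (G : ι → ι → ι → ℝ) :
    (∑ x, ∑ y, ∑ z, G x y z) = ∑ z, ∑ y, ∑ x, G x y z := by
  calc (∑ x, ∑ y, ∑ z, G x y z) = ∑ x, ∑ z, ∑ y, G x y z :=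
        Finset.sum_congr rfl fun x _ => Finset.sum_comm
    _ = ∑ z, ∑ x, ∑ y, G x y z := Finset.sum_comm
    _ = ∑ z, ∑ y, ∑ x, G x y z := Finset.sum_congr rfl fun z _ => Finset.sum_comm

lemma sum4_swap24 (F : ι → ι → ι → ι → ℝ) :
    (∑ a, ∑ b, ∑ c, ∑ d, F a b c d) = ∑ a, ∑ b, ∑ c, ∑ d, F a d c b := by
  refine Finset.sum_congr rfl fun a _ => ?_
  exact sum3_rev (fun b c d => F a b c d)

lemma sum4_sw12 (F : ι → ι → ι → ι → ℝ) :
    (∑ a, ∑ b, ∑ c, ∑ d, F a b c d) = ∑ a, ∑ b, ∑ c, ∑ d, F b a c d :=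
  Finset.sum_comm

lemma sum4_sw34 (F : ι → ι → ι → ι → ℝ) :
    (∑ a, ∑ b, ∑ c, ∑ d, F a b c d) = ∑ a, ∑ b, ∑ c, ∑ d, F a b d c :=
  Finset.sum_congr rfl fun a _ => Finset.sum_congr rfl fun b _ => Finset.sum_comm

lemma sum4_block (F : ι → ι → ι → ι → ℝ) :
    (∑ a, ∑ b, ∑ c, ∑ d, F a b c d) = ∑ a, ∑ b, ∑ c, ∑ d, F c d a b := by
  calc (∑ a, ∑ b, ∑ c, ∑ d, F a b c d)
      = ∑ a, ∑ c, ∑ b, ∑ d, F a b c d :=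
        Finset.sum_congr rfl fun a _ => Finset.sum_comm
    _ = ∑ c, ∑ a, ∑ b, ∑ d, F a b c d := Finset.sum_comm
    _ = ∑ c, ∑ a, ∑ d, ∑ b, F a b c d :=
        Finset.sum_congr rfl fun c _ => Finset.sum_congr rfl fun a _ => Finset.sum_comm
    _ = ∑ c, ∑ d, ∑ a, ∑ b, F a b c d :=
        Finset.sum_congr rfl fun c _ => Finset.sum_comm

/-- Phi x y z w = g^{pq} g^{rs} L_{p x y r} L_{q z w s} -/
def Phi (L : ι → ι → ι → ι → ℝ) (ginv : ι → ι → ℝ) (x y z w : ι) : ℝ :=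
  ∑ p, ∑ q, ∑ r, ∑ s, ginv p q * ginv r s * L p x y r * L q z w s

def Psi (L : ι → ι → ι → ι → ℝ) (ginv : ι → ι → ℝ) (x y z w : ι) : ℝ :=
  ∑ p, ∑ q, ∑ r, ∑ s, ginv p q * ginv r s * L p x y r * L z w q s

section PhiPsi
variable (L : ι → ι → ι → ι → ℝ) (ginv : ι → ι → ℝ)
variable (hA12 : ∀ a b c d, L a b c d = - L b a c d)
variable (hA34 : ∀ a b c d, L a b c d = - L a b d c)
variable (hPairL : ∀ a b c d, L a b c d = L c d a b)
variable (hB1L : ∀ a b c d, L a b c d + L b c a d + L c a b d = 0)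
variable (hgis : ∀ a b, ginv a b = ginv b a)

include hA12 hA34 hPairL in
lemma Lmove : ∀ s a b q, L s a b q = L q b a s := by
  intro s a b q
  rw [hPairL s a b q, hA12 b q s a, hA34 q b s a, neg_neg]

include hgis in
lemma Phi_swap : ∀ x y z w, Phi L ginv x y z w = Phi L ginv z w x y := by
  intro x y z w
  unfold Phi
  rw [sum4_sw12 (fun p q r s => ginv p q * ginv r s * L p x y r * L q z w s)]
  rw [sum4_sw34 (fun p q r s => ginv q p * ginv r s * L q x y r * L p z w s)]
  refine Finset.sum_congr rfl fun p _ => Finset.sum_congr rfl fun q _ =>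
    Finset.sum_congr rfl fun r _ => Finset.sum_congr rfl fun s _ => ?_
  rw [hgis q p, hgis s r]; ring

include hA12 hA34 hPairL in
lemma Phi_flip : ∀ x y z w, Phi L ginv x y z w = Phi L ginv y x w z := by
  intro x y z w
  unfold Phi
  rw [sum4_block (fun p q r s => ginv p q * ginv r s * L p y x r * L q w z s)]
  refine Finset.sum_congr rfl fun p _ => Finset.sum_congr rfl fun q _ =>
    Finset.sum_congr rfl fun r _ => Finset.sum_congr rfl fun s _ => ?_
  rw [Lmove L hA12 hA34 hPairL p x y r, Lmove L hA12 hA34 hPairL q z w s]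
  ring

include hA12 hB1L in
lemma Psi_eq : ∀ x y z w,
    Psi L ginv x y z w = Phi L ginv x y w z - Phi L ginv x y z w := by
  intro x y z w
  have hpt : ∀ q s, L z w q s = L q w z s - L q z w s := by
    intro q s
    have h1 := hB1L q z w s
    have h2 := hA12 w q z s
    linarith [h2 ▸ h1]
  unfold Psi Phi
  calc (∑ p, ∑ q, ∑ r, ∑ s, ginv p q * ginv r s * L p x y r * L z w q s)
      = ∑ p, ∑ q, ∑ r, ∑ s, (ginv p q * ginv r s * L p x y r * L q w z s
          - ginv p q * ginv r s * L p x y r * L q z w s) := by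
        refine Finset.sum_congr rfl fun p _ => Finset.sum_congr rfl fun q _ =>
          Finset.sum_congr rfl fun r _ => Finset.sum_congr rfl fun s _ => ?_
        rw [hpt q s]; ring
    _ = _ := by simp only [Finset.sum_sub_distrib]

end PhiPsi

section KeyQ
variable (R : ι → ι → ι → ι → ℝ) (g ginv : ι → ι → ℝ)
variable (hAnti : ∀ a b c d, R a b c d = - R b a c d)
variable (hB1 : ∀ a b c d, R a b c d + R b c a d + R c a b d = 0)
variable (hg : ∀ a b, g a b = g b a)
variable (hgis : ∀ a b, ginv a b = ginv b a)
variable (hginv : ∀ a b, (∑ m, ginv a m * g m b) = if a = b then (1:ℝ) else 0)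
variable (hPair : ∀ a b c d, (∑ e, R a b c e * g e d) = ∑ e, R c d a e * g e b)

/-- lowered Riemann tensor -/
def Lo (a b c d : ι) : ℝ := ∑ e, R a b c e * g e d

include hg hgis hginv in
lemma gg_del : ∀ f d, (∑ e, g f e * ginv e d) = if f = d then (1:ℝ) else 0 := by
  intro f d
  have : (∑ e, g f e * ginv e d) = ∑ e, ginv d e * g e f := by
    refine Finset.sum_congr rfl fun e _ => ?_
    rw [hg f e, hgis e d]; ring
  rw [this, hginv d f]
  simp [eq_comm]

include hg hgis hginv in
lemma Raise : ∀ a b c d, R a b c d = ∑ k, Lo R g a b c k * ginv k d := by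
  intro a b c d
  unfold Lo
  calc R a b c d = ∑ e, R a b c e * (if e = d then (1:ℝ) else 0) := by
        simp [mul_ite]
    _ = ∑ e, R a b c e * (∑ k, g e k * ginv k d) := by
        refine Finset.sum_congr rfl fun e _ => ?_
        rw [gg_del g ginv hg hgis hginv e d]
    _ = ∑ e, ∑ k, R a b c e * (g e k * ginv k d) := by
        refine Finset.sum_congr rfl fun e _ => ?_
        rw [Finset.mul_sum]
    _ = ∑ k, ∑ e, R a b c e * (g e k * ginv k d) := Finset.sum_comm
    _ = ∑ k, (∑ e, R a b c e * g e k) * ginv k d := by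
        refine Finset.sum_congr rfl fun k _ => ?_
        rw [Finset.sum_mul]
        exact Finset.sum_congr rfl fun e _ => by ring

include hAnti in
lemma LoA12 : ∀ a b c d, Lo R g a b c d = - Lo R g b a c d := by
  intro a b c d
  unfold Lo
  rw [← Finset.sum_neg_distrib]
  refine Finset.sum_congr rfl fun e _ => ?_
  rw [hAnti a b c e]; ring

include hPair in
lemma LoPair : ∀ a b c d, Lo R g a b c d = Lo R g c d a b := fun a b c d => hPair a b c d

include hAnti hPair in
lemma LoA34 : ∀ a b c d, Lo R g a b c d = - Lo R g a b d c := by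
  intro a b c d
  rw [LoPair R g hPair a b c d, LoA12 R g hAnti c d a b, LoPair R g hPair d c a b]

include hB1 in
lemma LoB1 : ∀ a b c d, Lo R g a b c d + Lo R g b c a d + Lo R g c a b d = 0 := by
  intro a b c d
  unfold Lo
  rw [← Finset.sum_add_distrib, ← Finset.sum_add_distrib]
  rw [show (0:ℝ) = ∑ _e : ι, (0:ℝ) by simp]
  refine Finset.sum_congr rfl fun e _ => ?_
  linear_combination g e d * hB1 a b c e

include hAnti hg hgis hginv hPair in
lemma T1 : ∀ x y z w, (∑ m, ∑ k, R m x y k * R k z w m) = Phi (Lo R g) ginv x y w z := by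
  intro x y z w
  have hLm := Lmove (Lo R g) (LoA12 R g hAnti) (LoA34 R g hAnti hPair) (LoPair R g hPair)
  calc (∑ m, ∑ k, R m x y k * R k z w m)
      = ∑ m, ∑ k, (∑ e, Lo R g m x y e * ginv e k) * (∑ f, Lo R g k z w f * ginv f m) := by
        refine Finset.sum_congr rfl fun m _ => Finset.sum_congr rfl fun k _ => ?_
        rw [← Raise R g ginv hg hgis hginv, ← Raise R g ginv hg hgis hginv]
    _ = ∑ m, ∑ k, ∑ e, ∑ f, ginv m f * ginv e k * Lo R g m x y e * Lo R g f w z k := by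
        refine Finset.sum_congr rfl fun m _ => Finset.sum_congr rfl fun k _ => ?_
        rw [Finset.sum_mul_sum]
        refine Finset.sum_congr rfl fun e _ => Finset.sum_congr rfl fun f _ => ?_
        rw [hLm k z w f, hgis m f]; ring
    _ = Phi (Lo R g) ginv x y w z := by
        unfold Phi
        exact (sum4_swap24 (fun p q r s => ginv p q * ginv r s * Lo R g p x y r * Lo R g q w z s)).symm

include hAnti hg hgis hginv hPair in
lemma T2 : ∀ x y z w, (∑ m, ∑ k, R m x y k * R z k w m) = - Phi (Lo R g) ginv x y w z := by
  intro x y z w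
  calc (∑ m, ∑ k, R m x y k * R z k w m)
      = ∑ m, - ∑ k, R m x y k * R k z w m := by
        refine Finset.sum_congr rfl fun m _ => ?_
        rw [← Finset.sum_neg_distrib]
        refine Finset.sum_congr rfl fun k _ => ?_
        rw [hAnti z k w m]; ring
    _ = - ∑ m, ∑ k, R m x y k * R k z w m := Finset.sum_neg_distrib _
    _ = - Phi (Lo R g) ginv x y w z := by
        rw [T1 R g ginv hAnti hg hgis hginv hPair x y z w]

include hAnti hg hgis hginv hPair in
lemma T3 : ∀ x y z w, (∑ m, ∑ k, R m x y k * R z w k m) = - Psi (Lo R g) ginv x y z w := by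
  intro x y z w
  calc (∑ m, ∑ k, R m x y k * R z w k m)
      = ∑ m, ∑ k, (∑ e, Lo R g m x y e * ginv e k) * (∑ f, Lo R g z w k f * ginv f m) := by
        refine Finset.sum_congr rfl fun m _ => Finset.sum_congr rfl fun k _ => ?_
        rw [← Raise R g ginv hg hgis hginv, ← Raise R g ginv hg hgis hginv]
    _ = ∑ m, ∑ k, ∑ e, ∑ f, -(ginv m f * ginv e k * Lo R g m x y e * Lo R g z w f k) := by
        refine Finset.sum_congr rfl fun m _ => Finset.sum_congr rfl fun k _ => ?_
        rw [Finset.sum_mul_sum]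
        refine Finset.sum_congr rfl fun e _ => Finset.sum_congr rfl fun f _ => ?_
        rw [LoA34 R g hAnti hPair z w k f, hgis m f]; ring
    _ = - ∑ m, ∑ k, ∑ e, ∑ f, ginv m f * ginv e k * Lo R g m x y e * Lo R g z w f k := by
        simp only [Finset.sum_neg_distrib]
    _ = - Psi (Lo R g) ginv x y z w := by
        unfold Psi
        rw [(sum4_swap24 (fun p q r s => ginv p q * ginv r s * Lo R g p x y r * Lo R g z w q s)).symm]

include hAnti hB1 hg hgis hginv hPair in
lemma keyQ : ∀ a b c d,
    (((∑ m, ∑ k, R m a b k * R k c d m) + (∑ m, ∑ k, R m a c k * R b k d m)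
        + (∑ m, ∑ k, R m a d k * R b c k m))
      + ((∑ m, ∑ k, R m b c k * R k a d m) + (∑ m, ∑ k, R m b a k * R c k d m)
        + (∑ m, ∑ k, R m b d k * R c a k m))
      + ((∑ m, ∑ k, R m c a k * R k b d m) + (∑ m, ∑ k, R m c b k * R a k d m)
        + (∑ m, ∑ k, R m c d k * R a b k m))) = 0 := by
  intro a b c d
  have hT1 := T1 R g ginv hAnti hg hgis hginv hPair
  have hT2 := T2 R g ginv hAnti hg hgis hginv hPair
  have hT3 := T3 R g ginv hAnti hg hgis hginv hPair
  have hA12' := LoA12 R g hAnti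
  have hA34' := LoA34 R g hAnti hPair
  have hPairL' := LoPair R g hPair
  have hB1L' := LoB1 R g hB1
  have hPsi := Psi_eq (Lo R g) ginv hA12' hB1L'
  have hflip := Phi_flip (Lo R g) ginv hA12' hA34' hPairL'
  have hswap := Phi_swap (Lo R g) ginv hgis
  rw [hT1 a b c d, hT2 a c b d, hT3 a d b c,
      hT1 b c a d, hT2 b a c d, hT3 b d c a,
      hT1 c a b d, hT2 c b a d, hT3 c d a b]
  rw [hPsi a d b c, hPsi b d c a, hPsi c d a b]
  have e1 : Phi (Lo R g) ginv a d c b = Phi (Lo R g) ginv b c d a :=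
    (hflip a d c b).trans (hswap d a b c)
  have e2 : Phi (Lo R g) ginv a d b c = Phi (Lo R g) ginv c b d a :=
    (hflip a d b c).trans (hswap d a c b)
  have e3 : Phi (Lo R g) ginv b d a c = Phi (Lo R g) ginv c a d b :=
    (hflip b d a c).trans (hswap d b c a)
  have e4 : Phi (Lo R g) ginv b d c a = Phi (Lo R g) ginv a c d b :=
    (hflip b d c a).trans (hswap d b a c)
  have e5 : Phi (Lo R g) ginv c d b a = Phi (Lo R g) ginv a b d c :=
    (hflip c d b a).trans (hswap d c a b)
  have e6 : Phi (Lo R g) ginv c d a b = Phi (Lo R g) ginv b a d c :=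
    (hflip c d a b).trans (hswap d c b a)
  linarith [e1, e2, e3, e4, e5, e6]

include hAnti hPair hg hgis hginv in
lemma raisedAnti : ∀ x y q k,
    (∑ p, ginv p q * R x y p k) = - ∑ p, ginv p k * R x y p q := by
  intro x y q k
  calc (∑ p, ginv p q * R x y p k)
      = ∑ p, ∑ f, -(ginv p q * (Lo R g x y f p * ginv f k)) := by
        refine Finset.sum_congr rfl fun p _ => ?_
        rw [Raise R g ginv hg hgis hginv x y p k, Finset.mul_sum]
        refine Finset.sum_congr rfl fun f _ => ?_
        rw [LoA34 R g hAnti hPair x y p f]; ring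
    _ = - ∑ p, ∑ f, ginv p q * (Lo R g x y f p * ginv f k) := by
        simp only [Finset.sum_neg_distrib]
    _ = - ∑ p, ∑ f, ginv f q * (Lo R g x y p f * ginv p k) := by
        rw [Finset.sum_comm]
    _ = - ∑ p, ginv p k * R x y p q := by
        refine congrArg Neg.neg (Finset.sum_congr rfl fun p _ => ?_)
        rw [Raise R g ginv hg hgis hginv x y p q, Finset.mul_sum]
        exact Finset.sum_congr rfl fun f _ => by ring

end KeyQ

lemma sum3_cyc (F : ι → ι → ι → ℝ) :
    (∑ p, ∑ q, ∑ k, F p q k) = ∑ q, ∑ k, ∑ p, F p q k := by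
  calc (∑ p, ∑ q, ∑ k, F p q k) = ∑ q, ∑ p, ∑ k, F p q k := Finset.sum_comm
    _ = ∑ q, ∑ k, ∑ p, F p q k := Finset.sum_congr rfl fun q _ => Finset.sum_comm

end NCSaux


open Finset

theorem nearly_conformally_symmetric_identity {ι : Type*} [Fintype ι] [DecidableEq ι]
    (R : ι → ι → ι → ι → ℝ)            -- R a b c d = R_{abc}{}^d
    (DR : ι → ι → ι → ι → ι → ℝ)        -- DR x a b c d = ∇_x R_{abc}{}^d
    (D2R : ι → ι → ι → ι → ι → ι → ℝ)   -- D2R x y a b c d = ∇_x ∇_y R_{abc}{}^d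
    (hAnti : ∀ a b c d, R a b c d = - R b a c d)
    (hDAnti : ∀ x a b c d, DR x a b c d = - DR x b a c d)
    (hD2Anti : ∀ x y a b c d, D2R x y a b c d = - D2R x y b a c d)
    (hB1 : ∀ a b c d, R a b c d + R b c a d + R c a b d = 0)
    (hB2 : ∀ a b c d e, DR a b c d e + DR b c a d e + DR c a b d e = 0)
    (hDB2 : ∀ x a b c d e,
      D2R x a b c d e + D2R x b c a d e + D2R x c a b d e = 0)
    (hComm : ∀ x y c d e f,
      D2R x y c d e f - D2R y x c d e f =
        - (∑ k, R x y c k * R k d e f) - (∑ k, R x y d k * R c k e f)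
        - (∑ k, R x y e k * R c d k f) + (∑ k, R x y k f * R c d e k))
    (g ginv : ι → ι → ℝ)
    (hg : ∀ a b, g a b = g b a)
    (hginvsym : ∀ a b, ginv a b = ginv b a)
    (hginv : ∀ a b, (∑ m, ginv a m * g m b) = if a = b then (1:ℝ) else 0)
    (hPair : ∀ a b c d, (∑ e, R a b c e * g e d) = ∑ e, R c d a e * g e b)
    (hn : 1 < Fintype.card ι)
    (hNCS : ∀ a b c,
      (∑ m, DR a b m c m) - (∑ m, DR b a m c m)
      = (1 / (2 * ((Fintype.card ι : ℝ) - 1))) *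
        (g b c * (∑ p, ∑ q, ginv p q * (∑ m, DR a p m q m))
         - g a c * (∑ p, ∑ q, ginv p q * (∑ m, DR b p m q m))))
    (hNCS2 : ∀ x a b c,
      (∑ m, D2R x a b m c m) - (∑ m, D2R x b a m c m)
      = (1 / (2 * ((Fintype.card ι : ℝ) - 1))) *
        (g b c * (∑ p, ∑ q, ginv p q * (∑ m, D2R x a p m q m))
         - g a c * (∑ p, ∑ q, ginv p q * (∑ m, D2R x b p m q m)))) :
    ∀ a b c e,
      (∑ m, (∑ k, R a k m k) * R b c e m) + (∑ m, (∑ k, R b k m k) * R c a e m)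
      + (∑ m, (∑ k, R c k m k) * R a b e m) = 0 := by
  intro a b c e
  have hRA := NCSaux.raisedAnti R g ginv hAnti hg hginvsym hginv hPair
  have hKQ := NCSaux.keyQ R g ginv hAnti hB1 hg hginvsym hginv hPair
  -- Step C : commutator applied to the Ricci tensor
  have hC : ∀ x y p q, (∑ m, D2R x y p m q m) - (∑ m, D2R y x p m q m)
      = -(∑ k, R x y p k * (∑ n, R k n q n)) - (∑ k, R x y q k * (∑ n, R p n k n)) := by
    intro x y p q
    have c0 : (∑ m, D2R x y p m q m) - (∑ m, D2R y x p m q m)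
        = -(∑ m, ∑ k, R x y p k * R k m q m) - (∑ m, ∑ k, R x y m k * R p k q m)
          - (∑ m, ∑ k, R x y q k * R p m k m) + (∑ m, ∑ k, R x y k m * R p m q k) := by
      calc (∑ m, D2R x y p m q m) - (∑ m, D2R y x p m q m)
          = ∑ m, (D2R x y p m q m - D2R y x p m q m) := by rw [Finset.sum_sub_distrib]
        _ = ∑ m, (-(∑ k, R x y p k * R k m q m) - (∑ k, R x y m k * R p k q m)
              - (∑ k, R x y q k * R p m k m) + (∑ k, R x y k m * R p m q k)) :=
            Finset.sum_congr rfl fun m _ => hComm x y p m q m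
        _ = _ := by
            simp only [Finset.sum_add_distrib, Finset.sum_sub_distrib, Finset.sum_neg_distrib]
    have c1 : (∑ m, ∑ k, R x y p k * R k m q m) = ∑ k, R x y p k * (∑ n, R k n q n) := by
      rw [Finset.sum_comm]
      exact Finset.sum_congr rfl fun k _ => (Finset.mul_sum _ _ _).symm
    have c3 : (∑ m, ∑ k, R x y q k * R p m k m) = ∑ k, R x y q k * (∑ n, R p n k n) := by
      rw [Finset.sum_comm]
      exact Finset.sum_congr rfl fun k _ => (Finset.mul_sum _ _ _).symm
    have c24 : (∑ m, ∑ k, R x y m k * R p k q m) = ∑ m, ∑ k, R x y k m * R p m q k :=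
      Finset.sum_comm
    linarith [c0, c1, c3, c24]
  -- Step D : symmetry of the second derivative of the scalar curvature
  have hS2 : ∀ x y, (∑ p, ∑ q, ginv p q * (∑ m, D2R x y p m q m))
      = ∑ p, ∑ q, ginv p q * (∑ m, D2R y x p m q m) := by
    intro x y
    have hD : (∑ p, ∑ q, ginv p q * (∑ m, D2R x y p m q m))
        - (∑ p, ∑ q, ginv p q * (∑ m, D2R y x p m q m))
        = ∑ p, ∑ q, ginv p q * ((∑ m, D2R x y p m q m) - (∑ m, D2R y x p m q m)) := by
      rw [← Finset.sum_sub_distrib]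
      refine Finset.sum_congr rfl fun p _ => ?_
      rw [← Finset.sum_sub_distrib]
      exact Finset.sum_congr rfl fun q _ => (mul_sub _ _ _).symm
    have hD2 : (∑ p, ∑ q, ginv p q * (∑ m, D2R x y p m q m))
        - (∑ p, ∑ q, ginv p q * (∑ m, D2R y x p m q m))
        = -(∑ p, ∑ q, ∑ k, ginv p q * (R x y p k * (∑ n, R k n q n)))
          - (∑ p, ∑ q, ∑ k, ginv p q * (R x y q k * (∑ n, R p n k n))) := by
      rw [hD]
      calc (∑ p, ∑ q, ginv p q * ((∑ m, D2R x y p m q m) - (∑ m, D2R y x p m q m)))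
          = ∑ p, ∑ q, (-(∑ k, ginv p q * (R x y p k * (∑ n, R k n q n)))
              - (∑ k, ginv p q * (R x y q k * (∑ n, R p n k n)))) := by
            refine Finset.sum_congr rfl fun p _ => Finset.sum_congr rfl fun q _ => ?_
            rw [hC x y p q, mul_sub, mul_neg, Finset.mul_sum, Finset.mul_sum]
        _ = _ := by
            simp only [Finset.sum_sub_distrib, Finset.sum_neg_distrib]
    have hS2b : (∑ p, ∑ q, ∑ k, ginv p q * (R x y q k * (∑ n, R p n k n)))
        = ∑ p, ∑ q, ∑ k, ginv p q * (R x y p k * (∑ n, R q n k n)) := by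
      rw [Finset.sum_comm]
      refine Finset.sum_congr rfl fun p _ => Finset.sum_congr rfl fun q _ =>
        Finset.sum_congr rfl fun k _ => ?_
      rw [hginvsym q p]
    have hmerge : (∑ p, ∑ q, ∑ k, ginv p q * (R x y p k * (∑ n, R k n q n)))
        + (∑ p, ∑ q, ∑ k, ginv p q * (R x y p k * (∑ n, R q n k n)))
        = ∑ q, ∑ k, (∑ p, ginv p q * R x y p k) * ((∑ n, R k n q n) + (∑ n, R q n k n)) := by
      calc (∑ p, ∑ q, ∑ k, ginv p q * (R x y p k * (∑ n, R k n q n)))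
          + (∑ p, ∑ q, ∑ k, ginv p q * (R x y p k * (∑ n, R q n k n)))
          = ∑ p, ∑ q, ∑ k, (ginv p q * R x y p k) * ((∑ n, R k n q n) + (∑ n, R q n k n)) := by
            simp only [← Finset.sum_add_distrib]
            refine Finset.sum_congr rfl fun p _ => Finset.sum_congr rfl fun q _ =>
              Finset.sum_congr rfl fun k _ => by rw [Finset.sum_add_distrib]; ring
        _ = ∑ q, ∑ k, ∑ p, (ginv p q * R x y p k) * ((∑ n, R k n q n) + (∑ n, R q n k n)) :=
            NCSaux.sum3_cyc _
        _ = _ := Finset.sum_congr rfl fun q _ => Finset.sum_congr rfl fun k _ =>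
            (Finset.sum_mul _ _ _).symm
    have hZ : (∑ q, ∑ k, (∑ p, ginv p q * R x y p k) * ((∑ n, R k n q n) + (∑ n, R q n k n))) = 0 := by
      have h1 : (∑ q, ∑ k, (∑ p, ginv p q * R x y p k) * ((∑ n, R k n q n) + (∑ n, R q n k n)))
          = -(∑ q, ∑ k, (∑ p, ginv p q * R x y p k) * ((∑ n, R k n q n) + (∑ n, R q n k n))) := by
        calc (∑ q, ∑ k, (∑ p, ginv p q * R x y p k) * ((∑ n, R k n q n) + (∑ n, R q n k n)))
            = ∑ q, ∑ k, (∑ p, ginv p k * R x y p q) * ((∑ n, R q n k n) + (∑ n, R k n q n)) :=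
              Finset.sum_comm
          _ = ∑ q, ∑ k, -((∑ p, ginv p q * R x y p k) * ((∑ n, R k n q n) + (∑ n, R q n k n))) := by
              refine Finset.sum_congr rfl fun q _ => Finset.sum_congr rfl fun k _ => ?_
              rw [hRA x y k q]; ring
          _ = _ := by simp only [Finset.sum_neg_distrib]
      linarith
    linarith [hD2, hS2b, hmerge, hZ]
  -- Step E : divergence of the second derivative via NCS2
  have hE : ∀ x u v d, (∑ m, D2R x m u v d m)
      = (1 / (2 * ((Fintype.card ι : ℝ) - 1))) *
        (g u d * (∑ p, ∑ q, ginv p q * (∑ m, D2R x v p m q m))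
         - g v d * (∑ p, ∑ q, ginv p q * (∑ m, D2R x u p m q m))) := by
    intro x u v d
    have h2 : (∑ m, D2R x u v m d m) + (∑ m, D2R x v m u d m) + (∑ m, D2R x m u v d m) = 0 := by
      rw [← Finset.sum_add_distrib, ← Finset.sum_add_distrib]
      exact Finset.sum_eq_zero fun m _ => hDB2 x u v m d m
    have h3 : (∑ m, D2R x v m u d m) = - ∑ m, D2R x v u m d m := by
      rw [← Finset.sum_neg_distrib]
      exact Finset.sum_congr rfl fun m _ => hD2Anti x v m u d m
    have h4 := hNCS2 x u v d
    linear_combination h2 - h3 - h4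
  -- cyclic sum of Step E vanishes
  have hcyc : (∑ m, D2R a m b c e m) + (∑ m, D2R b m c a e m) + (∑ m, D2R c m a b e m) = 0 := by
    rw [hE a b c e, hE b c a e, hE c a b e, hS2 b a, hS2 c b, hS2 c a]
    ring
  -- Step F : contracted differentiated second Bianchi
  have hF : (∑ m, D2R m a b c e m) + (∑ m, D2R m b c a e m) + (∑ m, D2R m c a b e m) = 0 := by
    rw [← Finset.sum_add_distrib, ← Finset.sum_add_distrib]
    exact Finset.sum_eq_zero fun m _ => hDB2 m a b c e m
  -- Step G : commutator of the contracted derivatives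
  have hG : ∀ α β γ, (∑ m, D2R m α β γ e m) - (∑ m, D2R α m β γ e m)
      = -((∑ m, ∑ k, R m α β k * R k γ e m) + (∑ m, ∑ k, R m α γ k * R β k e m)
          + (∑ m, ∑ k, R m α e k * R β γ k m))
        - (∑ m, (∑ k, R α k m k) * R β γ e m) := by
    intro α β γ
    have c0 : (∑ m, D2R m α β γ e m) - (∑ m, D2R α m β γ e m)
        = -(∑ m, ∑ k, R m α β k * R k γ e m) - (∑ m, ∑ k, R m α γ k * R β k e m)
          - (∑ m, ∑ k, R m α e k * R β γ k m) + (∑ m, ∑ k, R m α k m * R β γ e k) := by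
      calc (∑ m, D2R m α β γ e m) - (∑ m, D2R α m β γ e m)
          = ∑ m, (D2R m α β γ e m - D2R α m β γ e m) := by rw [Finset.sum_sub_distrib]
        _ = ∑ m, (-(∑ k, R m α β k * R k γ e m) - (∑ k, R m α γ k * R β k e m)
              - (∑ k, R m α e k * R β γ k m) + (∑ k, R m α k m * R β γ e k)) :=
            Finset.sum_congr rfl fun m _ => hComm m α β γ e m
        _ = _ := by
            simp only [Finset.sum_add_distrib, Finset.sum_sub_distrib, Finset.sum_neg_distrib]
    have clast : (∑ m, ∑ k, R m α k m * R β γ e k) = - ∑ m, (∑ k, R α k m k) * R β γ e m := by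
      calc (∑ m, ∑ k, R m α k m * R β γ e k)
          = ∑ k, ∑ m, R m α k m * R β γ e k := Finset.sum_comm
        _ = ∑ k, -((∑ m, R α m k m) * R β γ e k) := by
            refine Finset.sum_congr rfl fun k _ => ?_
            rw [Finset.sum_mul, ← Finset.sum_neg_distrib]
            refine Finset.sum_congr rfl fun m _ => ?_
            rw [hAnti m α k m]; ring
        _ = - ∑ k, (∑ m, R α m k m) * R β γ e k := Finset.sum_neg_distrib _
    linarith [c0, clast]
  -- assemble
  have g1 := hG a b c
  have g2 := hG b c a
  have g3 := hG c a b
  have kq := hKQ a b c e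
  linarith [g1, g2, g3, hcyc, hF, kq]
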